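/- Let q = p^m be an odd prime power, let n ≥ 2, and let C be an extended 1-perfect code in the Hamming graph H(n,q). Then n = (q^l + q − 2)/(q − 1) for some odd positive integer l. -/

import Mathlib

/-- The Hamming graph `H(n,q)`: vertices are `Fin n → ZMod q`, two vertices are
adjacent iff their Hamming distance is `1`. -/
def hammingGraph (n q : ℕ) : SimpleGraph (Fin n → ZMod q) where
  Adj x y := hammingDist x y = 1
  symm := ⟨by intro x y h; rwa [hammingDist_comm]⟩
  loopless := ⟨by intro x h; simp [hammingDist_self] at h⟩

/-- The distance from a vertex `x` to a code `C` in a graph `G`. -/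
noncomputable def distToCode {V : Type*} (G : SimpleGraph V) (C : Set V) (x : V) : ℕ :=
  sInf {d : ℕ | ∃ c ∈ C, G.dist x c = d}

/-- The code distance of a code `C` in a graph `G`: the minimum distance between
two distinct codewords. -/
noncomputable def codeDist {V : Type*} (G : SimpleGraph V) (C : Set V) : ℕ :=
  sInf {d : ℕ | ∃ x ∈ C, ∃ y ∈ C, x ≠ y ∧ G.dist x y = d}

/-- A code `C` is `1`-perfect if every vertex is at distance at most `1`
from exactly one codeword. -/
def IsOnePerfect {V : Type*} (G : SimpleGraph V) (C : Set V) : Prop :=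
  ∀ x, ∃! c, c ∈ C ∧ G.dist x c ≤ 1

/-- Deleting the `i`-th coordinate of a tuple. -/
def deleteCoord {α : Type*} {n : ℕ} (i : Fin n) (c : Fin n → α) (j : Fin (n - 1)) : α :=
  c (Fin.cast (show n - 1 + 1 = n by have := i.pos; omega)
      ((Fin.cast (show n = n - 1 + 1 by have := i.pos; omega) i).succAbove j))

/-- The projection (puncturing) of a code in `H(n,q)` at coordinate `i`. -/
def hammingProj {n q : ℕ} (i : Fin n) (C : Set (Fin n → ZMod q)) :
    Set (Fin (n - 1) → ZMod q) :=
  (deleteCoord i) '' C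

/-- A code `C` in `H(n,q)` is extended `1`-perfect if it is nonempty, its code distance
is `4`, and its projection at some coordinate is a `1`-perfect code in `H(n-1,q)`. -/
def IsExtOnePerfectH (n q : ℕ) (C : Set (Fin n → ZMod q)) : Prop :=
  C.Nonempty ∧ codeDist (hammingGraph n q) C = 4 ∧
    ∃ i : Fin n, IsOnePerfect (hammingGraph (n - 1) q) (hammingProj i C)

/-- A perfect coloring of `G` in `k` colors with quotient matrix `S`: a surjective map
`f` onto the colors such that every vertex of color `i` has exactly `S i j` neighbours
of color `j`. -/
def IsPerfectColoring {V : Type*} (G : SimpleGraph V) {k : ℕ} (f : V → Fin k)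
    (S : Matrix (Fin k) (Fin k) ℤ) : Prop :=
  Function.Surjective f ∧
    ∀ v j, (({u | G.Adj v u ∧ f u = j} : Set V).ncard : ℤ) = S (f v) j

/-- A code `C` in `G` is completely regular with quotient matrix `S` if the distance
coloring `x ↦ d(x, C)` is a perfect coloring with quotient matrix `S`. -/
def IsCompletelyRegular {V : Type*} (G : SimpleGraph V) (C : Set V) {k : ℕ}
    (S : Matrix (Fin k) (Fin k) ℤ) : Prop :=
  ∃ h : ∀ x, distToCode G C x < k,
    IsPerfectColoring G (fun x => (⟨distToCode G C x, h x⟩ : Fin k)) S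

/-- The connecting set of the Shrikhande graph as a Cayley graph on `ℤ₄ × ℤ₄`. -/
def shrikhandeSet : Set (ZMod 4 × ZMod 4) :=
  {(0, 1), (1, 0), (0, 3), (3, 0), (1, 1), (3, 3)}

/-- The vertex set of the graph `D(m,n)`. -/
abbrev DoobV (m n : ℕ) := (Fin m → ZMod 4 × ZMod 4) × (Fin n → ZMod 4)

/-- The graph `D(m,n)`: the direct product of `m` copies of the Shrikhande graph and
`n` copies of `K₄`. Two vertices are adjacent iff they differ in exactly one
coordinate and, if it is a Shrikhande coordinate, the difference there lies in the
connecting set. For `m > 0` it is a Doob graph; `D(0,n) = H(n,4)`. -/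
def doobGraph (m n : ℕ) : SimpleGraph (DoobV m n) :=
  SimpleGraph.fromRel (fun x y =>
    (∃ i, x.1 i - y.1 i ∈ shrikhandeSet ∧ (∀ j, j ≠ i → x.1 j = y.1 j) ∧ x.2 = y.2) ∨
    (∃ i, x.2 i ≠ y.2 i ∧ (∀ j, j ≠ i → x.2 j = y.2 j) ∧ x.1 = y.1))

/-- The projection (puncturing) of a code in `D(m,n)` at the `K₄` coordinate `i`. -/
def doobProj {m n : ℕ} (i : Fin n) (C : Set (DoobV m n)) : Set (DoobV m (n - 1)) :=
  (fun x => (x.1, deleteCoord i x.2)) '' C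

/-- A code `C` in `D(m,n)`, `n ≥ 1`, is extended `1`-perfect if it is nonempty, its code
distance is `4`, and its projection at some `K₄` coordinate is a `1`-perfect code in
`D(m,n-1)`. A code `C` in `D(m,0)` is extended `1`-perfect if it is nonempty, its code
distance is `4`, and `2m = (4^l+2)/3` and `|C| = 4^(2m-l-1)` for some `l ≥ 1`. -/
def IsExtOnePerfectD (m n : ℕ) (C : Set (DoobV m n)) : Prop :=
  C.Nonempty ∧ codeDist (doobGraph m n) C = 4 ∧
    (if n = 0 then
        ∃ l : ℕ, 0 < l ∧ 3 * (2 * m) = 4 ^ l + 2 ∧ C.ncard = 4 ^ (2 * m - l - 1)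
      else ∃ i : Fin n, IsOnePerfect (doobGraph m (n - 1)) (doobProj i C))



set_option linter.unusedSectionVars false
set_option maxHeartbeats 1000000
section
open Finset

section Toolkit
variable {ι : Type*} [Fintype ι] [DecidableEq ι] {α : Type*} [DecidableEq α]

lemma hd_eq_card (x y : ι → α) : hammingDist x y = (Finset.univ.filter fun s => x s ≠ y s).card := rfl

lemma hd_le_of_subset {x y : ι → α} {F : Finset ι} (h : ∀ s, x s ≠ y s → s ∈ F) :
    hammingDist x y ≤ F.card := by
  refine Finset.card_le_card ?_
  intro s hs
  rw [Finset.mem_filter] at hs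
  exact h s hs.2

lemma eq_coord_of_hd_le_one {x y : ι → α} (h : hammingDist x y ≤ 1) {s t : ι}
    (hs : x s ≠ y s) (ht : x t ≠ y t) : s = t := by
  by_contra hst
  have h2 : ({s, t} : Finset ι) ⊆ Finset.univ.filter fun u => x u ≠ y u := by
    intro u hu
    simp only [Finset.mem_insert, Finset.mem_singleton] at hu
    rcases hu with rfl | rfl <;> simp [hs, ht]
  have := Finset.card_le_card h2
  rw [Finset.card_pair hst] at this
  rw [hd_eq_card] at h
  omega

lemma hd_update_self {x y : ι → α} {s : ι} (h : x s ≠ y s) :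
    hammingDist x (Function.update x s (y s)) = 1 := by
  rw [hd_eq_card]
  have he : (Finset.univ.filter fun u => x u ≠ Function.update x s (y s) u) = {s} := by
    ext u
    simp only [Finset.mem_filter, Finset.mem_univ, true_and, Finset.mem_singleton]
    rcases eq_or_ne u s with rfl | hu
    · simp [h]
    · simp [Function.update_of_ne hu, hu]
  rw [he, Finset.card_singleton]

lemma hd_update_step {x y : ι → α} {s : ι} (h : x s ≠ y s) :
    hammingDist (Function.update x s (y s)) y + 1 = hammingDist x y := by
  rw [hd_eq_card, hd_eq_card]
  have he : (Finset.univ.filter fun u => Function.update x s (y s) u ≠ y u)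
      = (Finset.univ.filter fun u => x u ≠ y u).erase s := by
    ext u
    simp only [Finset.mem_filter, Finset.mem_univ, true_and, Finset.mem_erase]
    rcases eq_or_ne u s with rfl | hu
    · simp
    · simp [Function.update_of_ne hu, hu]
  rw [he, Finset.card_erase_add_one (by simp [h])]

end Toolkit

section Graph
variable {M q : ℕ}

lemma hg_exists_walk (k : ℕ) : ∀ (x y : Fin M → ZMod q), hammingDist x y ≤ k →
    ∃ w : (hammingGraph M q).Walk x y, w.length ≤ k := by
  induction k with
  | zero =>
    intro x y h
    have hxy : x = y := eq_of_hammingDist_eq_zero (by omega)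
    subst hxy; exact ⟨.nil, by simp⟩
  | succ k ih =>
    intro x y h
    rcases eq_or_ne x y with rfl | hxy
    · exact ⟨.nil, by simp⟩
    · have hex : ∃ s, x s ≠ y s := by
        by_contra hc; push_neg at hc; exact hxy (funext hc)
      obtain ⟨s, hs⟩ := hex
      have hstep := hd_update_step hs
      obtain ⟨w, hw⟩ := ih (Function.update x s (y s)) y (by omega)
      have hadj : (hammingGraph M q).Adj x (Function.update x s (y s)) := hd_update_self hs
      exact ⟨.cons hadj w, by simp; omega⟩

lemma hg_dist_le_hd (x y : Fin M → ZMod q) :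
    (hammingGraph M q).dist x y ≤ hammingDist x y := by
  obtain ⟨w, hw⟩ := hg_exists_walk (hammingDist x y) x y le_rfl
  exact le_trans (SimpleGraph.dist_le w) hw

lemma hg_connected [NeZero q] : (hammingGraph M q).Connected := by
  rw [SimpleGraph.connected_iff]
  refine ⟨fun x y => ?_, ⟨fun _ => 0⟩⟩
  obtain ⟨w, _⟩ := hg_exists_walk (hammingDist x y) x y le_rfl
  exact ⟨w⟩

lemma hg_dist_le_one_iff [NeZero q] {x y : Fin M → ZMod q} :
    (hammingGraph M q).dist x y ≤ 1 ↔ hammingDist x y ≤ 1 := by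
  constructor
  · intro h
    rcases Nat.le_one_iff_eq_zero_or_eq_one.mp h with h0 | h1
    · have : x = y := (hg_connected.dist_eq_zero_iff).mp h0
      subst this; simp
    · have : (hammingGraph M q).Adj x y := SimpleGraph.dist_eq_one_iff_adj.mp h1
      exact le_of_eq this
  · intro h
    rcases Nat.le_one_iff_eq_zero_or_eq_one.mp h with h0 | h1
    · have : x = y := eq_of_hammingDist_eq_zero h0
      subst this; simp [SimpleGraph.dist_self]
    · have : (hammingGraph M q).Adj x y := h1
      rw [SimpleGraph.dist_eq_one_iff_adj.mpr this]
end Graph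

section Count
variable {M q : ℕ} [NeZero q]

lemma ball_card (p : Fin M → ZMod q) :
    (Finset.univ.filter fun x => hammingDist x p ≤ 1).card = 1 + M * (q - 1) := by
  classical
  have hball : (Finset.univ.filter fun x => hammingDist x p ≤ 1) =
      insert p ((Finset.univ : Finset (Fin M)).biUnion fun j =>
        ((Finset.univ : Finset (ZMod q)).erase (p j)).image fun b => Function.update p j b) := by
    ext x
    simp only [Finset.mem_filter, Finset.mem_univ, true_and, and_true, Finset.mem_insert,
      Finset.mem_biUnion, Finset.mem_image, Finset.mem_erase]
    constructor
    · intro h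
      rcases Nat.le_one_iff_eq_zero_or_eq_one.mp h with h0 | h1
      · exact Or.inl (eq_of_hammingDist_eq_zero h0)
      · right
        have hex : ∃ s, x s ≠ p s := by
          by_contra hc; push_neg at hc
          have : x = p := funext hc
          subst this; simp at h1
        obtain ⟨s, hs⟩ := hex
        refine ⟨s, x s, hs, ?_⟩
        funext t
        rcases eq_or_ne t s with rfl | ht
        · simp [Function.update_self]
        · have hxt : x t = p t := by
            by_contra hxt
            exact ht (eq_coord_of_hd_le_one h hxt hs)
          rw [Function.update_of_ne ht, hxt]
    · intro h
      rcases h with rfl | ⟨s, b, hb, rfl⟩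
      · simp
      · have : hammingDist (Function.update p s b) p = 1 := by
          rw [hd_eq_card]
          have he : (Finset.univ.filter fun u => Function.update p s b u ≠ p u) = {s} := by
            ext u
            simp only [Finset.mem_filter, Finset.mem_univ, true_and, Finset.mem_singleton]
            rcases eq_or_ne u s with rfl | hu
            · simp [hb]
            · simp [Function.update_of_ne hu, hu]
          rw [he, Finset.card_singleton]
        omega
  rw [hball]
  rw [Finset.card_insert_of_notMem, Finset.card_biUnion]
  · have hone : ∀ j : Fin M, (((Finset.univ : Finset (ZMod q)).erase (p j)).image
        fun b => Function.update p j b).card = q - 1 := by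
      intro j
      rw [Finset.card_image_of_injective _ (Function.update_injective p j),
        Finset.card_erase_of_mem (Finset.mem_univ _), Finset.card_univ, ZMod.card]
    rw [Finset.sum_congr rfl fun j _ => hone j, Finset.sum_const, Finset.card_univ,
      Fintype.card_fin, smul_eq_mul]
    omega
  · intro j _ j' _ hjj'
    rw [Function.onFun, Finset.disjoint_left]
    intro x hx hx'
    simp only [Finset.mem_image, Finset.mem_erase, Finset.mem_univ, and_true] at hx hx'
    obtain ⟨b, hb, rfl⟩ := hx
    obtain ⟨b', hb', hEq⟩ := hx'
    have := congrFun hEq j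
    rw [Function.update_self, Function.update_of_ne hjj'] at this
    exact hb this.symm
  · simp only [Finset.mem_biUnion, Finset.mem_image, Finset.mem_erase, Finset.mem_univ,
      true_and, and_true, not_exists, not_and]
    rintro j b hb hEq
    have := congrFun hEq j
    rw [Function.update_self] at this
    exact hb this

lemma perfect_count {P : Set (Fin M → ZMod q)}
    (H1 : ∀ y, ∃! p, p ∈ P ∧ hammingDist y p ≤ 1) :
    (1 + M * (q - 1)) ∣ q ^ M := by
  classical
  set Pf : Finset (Fin M → ZMod q) := Finset.univ.filter (· ∈ P) with hPf
  have hcover : (Finset.univ : Finset (Fin M → ZMod q)) =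
      Pf.biUnion (fun p => Finset.univ.filter fun x => hammingDist x p ≤ 1) := by
    ext x
    simp only [Finset.mem_univ, true_iff, Finset.mem_biUnion, Finset.mem_filter, hPf]
    obtain ⟨p, ⟨hp, hd⟩, _⟩ := H1 x
    refine ⟨p, by simpa using hp, by simpa using hd⟩
  have hcard : (q : ℕ) ^ M = Pf.card * (1 + M * (q - 1)) := by
    have h1 : (Finset.univ : Finset (Fin M → ZMod q)).card = q ^ M := by
      rw [Finset.card_univ, Fintype.card_fun, ZMod.card, Fintype.card_fin]
    rw [← h1, hcover, Finset.card_biUnion, Finset.sum_congr rfl fun p _ => ball_card p,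
      Finset.sum_const, smul_eq_mul]
    intro p hp p' hp' hpp'
    simp only [Finset.disjoint_left, Finset.mem_filter, Finset.mem_univ, true_and]
    intro x hx hx'
    simp only [hPf, Finset.mem_coe, Finset.mem_filter, Finset.mem_univ, true_and] at hp hp'
    obtain ⟨u, _, huniq⟩ := H1 x
    exact hpp' ((huniq p ⟨hp, hx⟩).trans (huniq p' ⟨hp', hx'⟩).symm)
  exact ⟨Pf.card, by rw [hcard]; ring⟩
end Count

lemma pow_structure {p m q M : ℕ} (hp : p.Prime) (hm : 1 ≤ m) (hq : q = p ^ m)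
    (hM : 1 ≤ M) (hdvd : (1 + M * (q - 1)) ∣ q ^ M) :
    ∃ k : ℕ, 1 ≤ k ∧ 1 + M * (q - 1) = q ^ k := by
  have hp2 : 2 ≤ p := hp.two_le
  have hq2 : 2 ≤ q := by
    rw [hq]
    calc 2 = 2 ^ 1 := rfl
    _ ≤ p ^ 1 := Nat.pow_le_pow_left hp2 1
    _ ≤ p ^ m := Nat.pow_le_pow_right (by omega) hm
  -- rewrite q ^ M as p ^ (m * M)
  have hqM : q ^ M = p ^ (m * M) := by rw [hq, ← pow_mul]
  rw [hqM] at hdvd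
  obtain ⟨t, ht, hD⟩ := (Nat.dvd_prime_pow hp).mp hdvd
  -- show m ∣ t
  set r := t % m with hr
  set s := t / m with hs
  have htms : t = m * s + r := by rw [hr, hs]; exact (Nat.div_add_mod t m).symm
  have hrm : r < m := Nat.mod_lt _ (by omega)
  have hZ1 : ((p : ℤ) ^ m - 1) ∣ ((p : ℤ) ^ (m * s) - 1) := by
    have := sub_dvd_pow_sub_pow ((p : ℤ) ^ m) 1 s
    rwa [one_pow, ← pow_mul] at this
  have hZ2 : ((p : ℤ) ^ m - 1) ∣ ((p : ℤ) ^ t - 1) := by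
    have hDZ : ((p : ℤ) ^ t - 1) = (M : ℤ) * ((q : ℤ) - 1) := by
      have hcast := congrArg (Nat.cast : ℕ → ℤ) hD
      push_cast [Nat.cast_sub (by omega : 1 ≤ q)] at hcast
      linarith
    rw [hDZ, hq]
    push_cast
    exact dvd_mul_left _ _
  have hZ3 : ((p : ℤ) ^ m - 1) ∣ ((p : ℤ) ^ r - 1) := by
    have key : ((p : ℤ) ^ t - 1) - (p : ℤ) ^ r * ((p : ℤ) ^ (m * s) - 1) = (p : ℤ) ^ r - 1 := by
      rw [htms, pow_add]
      ring
    have := dvd_sub hZ2 (Dvd.dvd.mul_left hZ1 ((p : ℤ) ^ r))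
    rwa [key] at this
  have hr0 : r = 0 := by
    by_contra hr0
    have h1 : (1 : ℤ) ≤ (p : ℤ) ^ r := one_le_pow₀ (by exact_mod_cast hp.one_le)
    have h2 : (p : ℤ) ^ r < (p : ℤ) ^ m :=
      pow_lt_pow_right₀ (by exact_mod_cast hp.one_lt) hrm
    have h3 : (1 : ℤ) < (p : ℤ) ^ r := by
      have h2p : (2 : ℤ) ≤ (p : ℤ) := by exact_mod_cast hp2
      calc (1 : ℤ) < 2 := by norm_num
      _ ≤ (p : ℤ) ^ 1 := by simpa
      _ ≤ (p : ℤ) ^ r := pow_le_pow_right₀ (by omega) (by omega)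
    have hle := Int.le_of_dvd (by linarith) hZ3
    linarith
  refine ⟨s, ?_, ?_⟩
  · rcases Nat.eq_zero_or_pos s with hs0 | hs1
    · exfalso
      have : t = 0 := by rw [htms, hr0, hs0]; simp
      rw [this, pow_zero] at hD
      have : M * (q - 1) ≥ 1 := by
        have : q - 1 ≥ 1 := by omega
        calc 1 = 1 * 1 := rfl
        _ ≤ M * (q - 1) := Nat.mul_le_mul hM this
      omega
    · exact hs1
  · rw [hD, hq, ← pow_mul]
    congr 1
    omega

lemma geom_parity {q k M : ℕ} (hq2 : 2 ≤ q) (hodd : Odd q)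
    (hM : 1 + M * (q - 1) = q ^ k) (hModd : Odd M) : Odd k := by
  have hgeom : ∀ K : ℕ, (q - 1) * ∑ s ∈ Finset.range K, q ^ s = q ^ K - 1 := by
    intro K
    induction K with
    | zero => simp
    | succ K ih =>
      rw [Finset.sum_range_succ, Nat.mul_add, ih]
      have h1 : 1 ≤ q ^ K := Nat.one_le_pow _ _ (by omega)
      have h2 : q ^ (K + 1) = q * q ^ K := by rw [pow_succ]; ring
      have h3 : (q - 1) * q ^ K = q * q ^ K - q ^ K := by
        rw [Nat.sub_mul, one_mul]
      have h4 : q ^ K ≤ q * q ^ K := Nat.le_mul_of_pos_left _ (by omega)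
      omega
  have hMgeom : M = ∑ s ∈ Finset.range k, q ^ s := by
    have h1 : (q - 1) * M = (q - 1) * ∑ s ∈ Finset.range k, q ^ s := by
      rw [hgeom, Nat.mul_comm]
      omega
    exact Nat.eq_of_mul_eq_mul_left (by omega) h1
  have hmod : ∀ K : ℕ, (∑ s ∈ Finset.range K, q ^ s) % 2 = K % 2 := by
    intro K
    induction K with
    | zero => simp
    | succ K ih =>
      rw [Finset.sum_range_succ]
      have : q ^ K % 2 = 1 := Nat.odd_iff.mp (hodd.pow)
      omega
  have := hmod k
  rw [← hMgeom] at this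
  rw [Nat.odd_iff] at hModd ⊢
  omega

section Split
variable {n : ℕ} {α : Type*} [DecidableEq α] (i : Fin n)

private def eCoord (j : Fin (n - 1)) : Fin n :=
  Fin.cast (show n - 1 + 1 = n by have := i.pos; omega)
    ((Fin.cast (show n = n - 1 + 1 by have := i.pos; omega) i).succAbove j)

lemma deleteCoord_eq (c : Fin n → α) : deleteCoord i c = fun j => c (eCoord i j) := rfl

lemma eCoord_inj : Function.Injective (eCoord i) := by
  intro a b h
  unfold eCoord at h
  have := Fin.cast_injective (show n - 1 + 1 = n by have := i.pos; omega) h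
  exact (Fin.succAbove_right_injective) this

lemma eCoord_ne (j : Fin (n - 1)) : eCoord i j ≠ i := by
  unfold eCoord
  intro h
  have h2 : (Fin.cast (show n = n - 1 + 1 by have := i.pos; omega) i).succAbove j
      = Fin.cast (show n = n - 1 + 1 by have := i.pos; omega) i := by
    apply Fin.cast_injective (show n - 1 + 1 = n by have := i.pos; omega)
    rw [h]
    ext
    simp
  exact Fin.succAbove_ne _ j h2

lemma eCoord_surj {s : Fin n} (hs : s ≠ i) : ∃ j, eCoord i j = s := by
  have h1 : Fin.cast (show n = n - 1 + 1 by have := i.pos; omega) s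
      ≠ Fin.cast (show n = n - 1 + 1 by have := i.pos; omega) i := by
    intro h
    exact hs (Fin.cast_injective _ h)
  obtain ⟨j, hj⟩ := Fin.exists_succAbove_eq h1
  refine ⟨j, ?_⟩
  unfold eCoord
  rw [hj]
  ext
  simp

lemma image_eCoord : (Finset.univ : Finset (Fin (n-1))).image (eCoord i) = Finset.univ.erase i := by
  ext s
  simp only [Finset.mem_image, Finset.mem_erase, Finset.mem_univ, and_true, true_and]
  constructor
  · rintro ⟨j, _, rfl⟩
    exact eCoord_ne i j
  · intro hs
    obtain ⟨j, hj⟩ := eCoord_surj i hs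
    exact ⟨j, hj⟩

lemma hd_split (c c' : Fin n → α) :
    hammingDist c c' = hammingDist (deleteCoord i c) (deleteCoord i c')
      + (if c i = c' i then 0 else 1) := by
  rw [deleteCoord_eq, deleteCoord_eq]
  have hL : hammingDist c c' = ∑ s : Fin n, if c s ≠ c' s then 1 else 0 :=
    Finset.card_filter _ _
  have hR : hammingDist (fun j => c (eCoord i j)) (fun j => c' (eCoord i j))
      = ∑ j : Fin (n-1), if c (eCoord i j) ≠ c' (eCoord i j) then 1 else 0 :=
    Finset.card_filter _ _
  rw [hL, hR]
  rw [← Finset.sum_erase_add (Finset.univ) _ (Finset.mem_univ i)]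
  congr 1
  · rw [← image_eCoord i, Finset.sum_image (fun a _ b _ h => eCoord_inj i h)]
  · by_cases h : c i = c' i <;> simp [h]

end Split

lemma core_parity {M q : ℕ} [NeZero q] (hq3 : 3 ≤ q) (hM : 1 ≤ M)
    (P : Set (Fin M → ZMod q)) (f : (Fin M → ZMod q) → ZMod q)
    (H1 : ∀ y, ∃! p, p ∈ P ∧ hammingDist y p ≤ 1)
    (H2 : ∀ p ∈ P, ∀ p' ∈ P, p ≠ p' → 3 ≤ hammingDist p p')
    (H3 : ∀ p ∈ P, ∀ p' ∈ P, hammingDist p p' = 3 → f p ≠ f p') :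
    Odd M := by
  classical
  haveI : Fact (1 < q) := ⟨by omega⟩
  have haddne : ∀ a δ : ZMod q, δ ≠ 0 → a + δ ≠ a := by
    intro a δ hδ h
    exact hδ (add_left_cancel (h.trans (add_zero a).symm))
  obtain ⟨p0, ⟨hp0P, -⟩, -⟩ := H1 (fun _ => (0 : ZMod q))
  set j : Fin M := ⟨0, by omega⟩ with hjdef
  set β : ZMod q := p0 j + 1 with hβdef
  have hβ : β ≠ p0 j := haddne _ _ one_ne_zero
  set v : ZMod q := f p0 + 1 with hvdef
  have hv : v ≠ f p0 := haddne _ _ one_ne_zero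
  -- the central bound: two codewords at distance 3 from p0, sharing value β at j and
  -- differing from p0 at a, are at Hamming distance ≤ 3; ≤ 2 if they also agree at a.
  have bound : ∀ (a : Fin M), a ≠ j → ∀ r r' : Fin M → ZMod q,
      hammingDist r p0 = 3 → hammingDist r' p0 = 3 → r j = β → r' j = β →
      r a ≠ p0 a → r' a ≠ p0 a →
      (hammingDist r r' ≤ 3 ∧ (r a = r' a → hammingDist r r' ≤ 2)) := by
    intro a ha r r' h3 h3' hj1 hj2 ha1 ha2
    set D1 := Finset.univ.filter (fun s => r s ≠ p0 s) with hD1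
    set D2 := Finset.univ.filter (fun s => r' s ≠ p0 s) with hD2
    have hc1 : D1.card = 3 := by rw [hD1, ← hd_eq_card, h3]
    have hc2 : D2.card = 3 := by rw [hD2, ← hd_eq_card, h3']
    have hjD1 : j ∈ D1 := by
      rw [hD1, mem_filter]; exact ⟨mem_univ _, by rw [hj1]; exact hβ⟩
    have hjD2 : j ∈ D2 := by
      rw [hD2, mem_filter]; exact ⟨mem_univ _, by rw [hj2]; exact hβ⟩
    have haD1 : a ∈ D1 := by rw [hD1, mem_filter]; exact ⟨mem_univ _, ha1⟩
    have haD2 : a ∈ D2 := by rw [hD2, mem_filter]; exact ⟨mem_univ _, ha2⟩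
    have hinter : ({j, a} : Finset (Fin M)) ⊆ D1 ∩ D2 := by
      intro s hs
      simp only [mem_insert, mem_singleton] at hs
      rcases hs with rfl | rfl
      · exact mem_inter.mpr ⟨hjD1, hjD2⟩
      · exact mem_inter.mpr ⟨haD1, haD2⟩
    have hpair : ({j, a} : Finset (Fin M)).card = 2 := card_pair (Ne.symm ha)
    have hunion : (D1 ∪ D2).card ≤ 4 := by
      have h1 := Finset.card_union_add_card_inter D1 D2
      have h2 := Finset.card_le_card hinter
      omega
    have hsub3 : ∀ s, r s ≠ r' s → s ∈ (D1 ∪ D2).erase j := by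
      intro s hs
      rw [mem_erase, mem_union]
      constructor
      · rintro rfl
        rw [hj1, hj2] at hs
        exact hs rfl
      · by_contra hc
        rw [not_or] at hc
        rw [hD1, mem_filter, not_and_or, not_not] at hc
        rw [hD2, mem_filter, not_and_or, not_not] at hc
        have e1 : r s = p0 s := by rcases hc.1 with h | h; exacts [absurd (mem_univ s) h, h]
        have e2 : r' s = p0 s := by rcases hc.2 with h | h; exacts [absurd (mem_univ s) h, h]
        exact hs (e1.trans e2.symm)
    have hjU : j ∈ D1 ∪ D2 := mem_union_left _ hjD1
    have hcard_erase : ((D1 ∪ D2).erase j).card ≤ 3 := by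
      rw [card_erase_of_mem hjU]; omega
    constructor
    · exact le_trans (hd_le_of_subset hsub3) hcard_erase
    · intro haa
      have hsub2 : ∀ s, r s ≠ r' s → s ∈ ((D1 ∪ D2).erase j).erase a := by
        intro s hs
        rw [mem_erase]
        refine ⟨?_, hsub3 s hs⟩
        rintro rfl
        exact hs haa
      have haU : a ∈ (D1 ∪ D2).erase j := by
        rw [mem_erase]; exact ⟨ha, mem_union_left _ haD1⟩
      have : (((D1 ∪ D2).erase j).erase a).card ≤ 2 := by
        rw [card_erase_of_mem haU, card_erase_of_mem hjU]; omega
      exact le_trans (hd_le_of_subset hsub2) this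
  -- the key unique-existence, for every coordinate a ≠ j
  have key : ∀ a : Fin M, a ≠ j → ∃! r : Fin M → ZMod q,
      r ∈ P ∧ hammingDist r p0 = 3 ∧ r j = β ∧ f r = v ∧ r a ≠ p0 a := by
    intro a ha
    set z : ZMod q → (Fin M → ZMod q) :=
      fun δ s => if s = j then β else if s = a then p0 a + δ else p0 s with hzdef
    have hzj : ∀ δ, z δ j = β := by intro δ; simp [hzdef]
    have hza : ∀ δ, z δ a = p0 a + δ := by intro δ; simp [hzdef, ha]
    have hzo : ∀ δ (s : Fin M), s ≠ j → s ≠ a → z δ s = p0 s := by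
      intro δ s h1 h2; simp [hzdef, h1, h2]
    have hz2 : ∀ δ : ZMod q, δ ≠ 0 → hammingDist (z δ) p0 = 2 := by
      intro δ hδ
      rw [hd_eq_card]
      have hfe : (Finset.univ.filter fun s => z δ s ≠ p0 s) = {j, a} := by
        ext s
        simp only [mem_filter, mem_univ, true_and, mem_insert, mem_singleton]
        constructor
        · intro hs
          by_contra hc
          push_neg at hc
          exact hs (hzo δ s hc.1 hc.2)
        · rintro (rfl | rfl)
          · rw [hzj]; exact hβ
          · rw [hza]; exact haddne _ δ hδ
      rw [hfe, card_pair (Ne.symm ha)]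
    set g : ZMod q → (Fin M → ZMod q) := fun δ => Classical.choose (H1 (z δ)) with hgdef
    have hgspec : ∀ δ, (g δ ∈ P ∧ hammingDist (z δ) (g δ) ≤ 1) ∧
        ∀ y, (y ∈ P ∧ hammingDist (z δ) y ≤ 1) → y = g δ :=
      fun δ => Classical.choose_spec (H1 (z δ))
    have props : ∀ δ : ZMod q, δ ≠ 0 →
        g δ ∈ P ∧ hammingDist (g δ) p0 = 3 ∧ g δ j = β ∧ g δ a = p0 a + δ ∧ f (g δ) ≠ f p0 := by
      intro δ hδ
      obtain ⟨⟨hgP, hg1⟩, -⟩ := hgspec δ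
      have hgne : g δ ≠ p0 := by
        intro h
        rw [h] at hg1
        rw [hz2 δ hδ] at hg1
        omega
      have h3 : hammingDist (g δ) p0 = 3 := by
        have hup : hammingDist (g δ) p0 ≤ 3 := by
          have htri := hammingDist_triangle (g δ) (z δ) p0
          rw [hammingDist_comm (g δ) (z δ)] at htri
          rw [hz2 δ hδ] at htri
          omega
        have hlow := H2 _ hgP _ hp0P hgne
        omega
      have hcoord : ∀ s t : Fin M, z δ s ≠ g δ s → z δ t ≠ g δ t → s = t :=
        fun s t hs ht => eq_coord_of_hd_le_one hg1 hs ht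
      have hgcoord : ∀ w : Fin M, g δ w ≠ z δ w →
          ∀ s : Fin M, s ≠ w → g δ s = z δ s := by
        intro w hw s hsw
        by_contra hs
        exact hsw (hcoord s w (fun h => hs h.symm) (fun h => hw h.symm))
      have hgj : g δ j = β := by
        by_contra hne
        have hjd : g δ j ≠ z δ j := by rw [hzj]; exact hne
        have hsub : hammingDist (g δ) p0 ≤ ({j, a} : Finset (Fin M)).card := by
          apply hd_le_of_subset
          intro s hs
          simp only [mem_insert, mem_singleton]
          by_contra hc
          push_neg at hc
          have hzs : g δ s = z δ s := hgcoord j hjd s hc.1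
          rw [hzs, hzo δ s hc.1 hc.2] at hs
          exact hs rfl
        rw [card_pair (Ne.symm ha)] at hsub
        omega
      have hga : g δ a = p0 a + δ := by
        by_contra hne
        have had : g δ a ≠ z δ a := by rw [hza]; exact hne
        have hsub : hammingDist (g δ) p0 ≤ ({j, a} : Finset (Fin M)).card := by
          apply hd_le_of_subset
          intro s hs
          simp only [mem_insert, mem_singleton]
          by_contra hc
          push_neg at hc
          have hzs : g δ s = z δ s := hgcoord a had s hc.2
          rw [hzs, hzo δ s hc.1 hc.2] at hs
          exact hs rfl
        rw [card_pair (Ne.symm ha)] at hsub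
        omega
      exact ⟨hgP, h3, hgj, hga, H3 _ hgP _ hp0P h3⟩
    have finj : ∀ δ δ' : ZMod q, δ ≠ 0 → δ' ≠ 0 → δ ≠ δ' → f (g δ) ≠ f (g δ') := by
      intro δ δ' hδ hδ' hne
      obtain ⟨hP1, h31, hj1, ha1, -⟩ := props δ hδ
      obtain ⟨hP2, h32, hj2, ha2, -⟩ := props δ' hδ'
      have hgne : g δ ≠ g δ' := by
        intro h
        have : p0 a + δ = p0 a + δ' := by rw [← ha1, h, ha2]
        exact hne (add_left_cancel this)
      have hble := (bound a ha (g δ) (g δ') h31 h32 hj1 hj2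
        (by rw [ha1]; exact haddne _ δ hδ) (by rw [ha2]; exact haddne _ δ' hδ')).1
      have hge := H2 _ hP1 _ hP2 hgne
      exact H3 _ hP1 _ hP2 (by omega)
    have hexists : ∃ δ : ZMod q, δ ≠ 0 ∧ f (g δ) = v := by
      have hEcard : ((Finset.univ : Finset (ZMod q)).erase 0).card = q - 1 := by
        rw [card_erase_of_mem (mem_univ _), card_univ, ZMod.card]
      have hinj : Set.InjOn (fun δ => f (g δ)) ((Finset.univ : Finset (ZMod q)).erase 0) := by
        intro δ hδ δ' hδ' h
        rw [Finset.coe_erase, Set.mem_diff, Set.mem_singleton_iff] at hδ hδ'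
        by_contra hne
        exact finj δ δ' hδ.2 hδ'.2 hne h
      have hicard : (((Finset.univ : Finset (ZMod q)).erase 0).image
          (fun δ => f (g δ))).card = q - 1 := by
        rw [Finset.card_image_of_injOn hinj, hEcard]
      have hsub : ((Finset.univ : Finset (ZMod q)).erase 0).image (fun δ => f (g δ))
          ⊆ Finset.univ.erase (f p0) := by
        intro w hw
        rw [mem_image] at hw
        obtain ⟨δ, hδ, rfl⟩ := hw
        rw [mem_erase] at hδ ⊢
        exact ⟨(props δ hδ.1).2.2.2.2, mem_univ _⟩
      have heq : ((Finset.univ : Finset (ZMod q)).erase 0).image (fun δ => f (g δ))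
          = Finset.univ.erase (f p0) := by
        apply Finset.eq_of_subset_of_card_le hsub
        rw [hicard, card_erase_of_mem (mem_univ _), card_univ, ZMod.card]
      have hvmem : v ∈ ((Finset.univ : Finset (ZMod q)).erase 0).image (fun δ => f (g δ)) := by
        rw [heq, mem_erase]
        exact ⟨hv, mem_univ _⟩
      rw [mem_image] at hvmem
      obtain ⟨δ, hδ, hfδ⟩ := hvmem
      rw [mem_erase] at hδ
      exact ⟨δ, hδ.1, hfδ⟩
    obtain ⟨δ, hδ0, hfv⟩ := hexists
    obtain ⟨hgP, h3, hgj, hga, -⟩ := props δ hδ0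
    have hgane : g δ a ≠ p0 a := by rw [hga]; exact haddne _ δ hδ0
    refine ⟨g δ, ⟨hgP, h3, hgj, hfv, hgane⟩, ?_⟩
    rintro r ⟨hrP, hr3, hrj, hrf, hra⟩
    by_contra hne
    have hge3 := H2 _ hrP _ hgP hne
    have hb := bound a ha r (g δ) hr3 h3 hrj hgj hra hgane
    by_cases hcase : r a = g δ a
    · have := hb.2 hcase
      omega
    · have h33 : hammingDist r (g δ) = 3 := by omega
      exact H3 _ hrP _ hgP h33 (by rw [hrf, hfv])
  -- double counting
  set Sv := Finset.univ.filter
    (fun r : Fin M → ZMod q => r ∈ P ∧ hammingDist r p0 = 3 ∧ r j = β ∧ f r = v) with hSv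
  have count1 : ∀ r ∈ Sv, ((Finset.univ.erase j).filter fun a => r a ≠ p0 a).card = 2 := by
    intro r hr
    rw [hSv, mem_filter] at hr
    obtain ⟨-, hrP, hr3, hrj, hrf⟩ := hr
    have he : (Finset.univ.erase j).filter (fun a => r a ≠ p0 a)
        = (Finset.univ.filter fun a => r a ≠ p0 a).erase j :=
      by
      ext s
      rw [Finset.mem_filter, Finset.mem_erase, Finset.mem_erase, Finset.mem_filter]
      tauto
    have hjmem : j ∈ Finset.univ.filter (fun a => r a ≠ p0 a) := by
      rw [mem_filter]
      exact ⟨mem_univ _, by rw [hrj]; exact hβ⟩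
    rw [he, card_erase_of_mem hjmem, ← hd_eq_card, hr3]
  have count2 : ∀ a ∈ Finset.univ.erase j, (Sv.filter fun r => r a ≠ p0 a).card = 1 := by
    intro a ha'
    rw [mem_erase] at ha'
    obtain ⟨r, hr, huniq⟩ := key a ha'.1
    rw [Finset.card_eq_one]
    refine ⟨r, ?_⟩
    ext r'
    simp only [hSv, mem_filter, mem_univ, true_and, mem_singleton]
    constructor
    · rintro ⟨⟨hrP, hr3, hrj, hrf⟩, hra⟩
      exact huniq r' ⟨hrP, hr3, hrj, hrf, hra⟩
    · rintro rfl
      obtain ⟨h1, h2, h3', h4, h5⟩ := hr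
      exact ⟨⟨h1, h2, h3', h4⟩, h5⟩
  have hswap : ∑ r ∈ Sv, ((Finset.univ.erase j).filter fun a => r a ≠ p0 a).card
      = ∑ a ∈ Finset.univ.erase j, (Sv.filter fun r => r a ≠ p0 a).card := by
    simp_rw [Finset.card_filter]
    exact Finset.sum_comm
  have hL : ∑ r ∈ Sv, ((Finset.univ.erase j).filter fun a => r a ≠ p0 a).card = 2 * Sv.card := by
    rw [Finset.sum_congr rfl count1, Finset.sum_const, smul_eq_mul, Nat.mul_comm]
  have hR : ∑ a ∈ Finset.univ.erase j, (Sv.filter fun r => r a ≠ p0 a).card = M - 1 := by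
    rw [Finset.sum_congr rfl count2, Finset.sum_const, smul_eq_mul, Nat.mul_one,
      card_erase_of_mem (mem_univ _), card_univ, Fintype.card_fin]
  have hfin : 2 * Sv.card = M - 1 := hL.symm.trans (hswap.trans hR)
  obtain ⟨c, hc⟩ : ∃ c : ℕ, 2 * c = M - 1 := ⟨Sv.card, hfin⟩
  clear hfin hL hR hswap count1 count2 key bound
  have hM2 : M % 2 = 1 := by omega
  exact Nat.odd_iff.mpr hM2

end

/-- Corollary 2 (Statement 14): if `q = p^m` is an odd prime power and `C` is an
extended `1`-perfect code in `H(n,q)`, then `n = (q^l + q − 2)/(q − 1)` for some odd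
positive integer `l`. -/
theorem statement14 (p m q n : ℕ) (hp : p.Prime) (hm : 1 ≤ m) (hq : q = p ^ m)
    (hodd : Odd q) (hn : 2 ≤ n) (C : Set (Fin n → ZMod q))
    (hC : IsExtOnePerfectH n q C) :
    ∃ l : ℕ, Odd l ∧ 0 < l ∧ n * (q - 1) = q ^ l + q - 2 := by
  classical
  obtain ⟨hCne, hd4, i, hperf⟩ := hC
  have hq2 : 2 ≤ q := by
    rw [hq]
    calc 2 = 2 ^ 1 := rfl
    _ ≤ p ^ 1 := Nat.pow_le_pow_left hp.two_le 1
    _ ≤ p ^ m := Nat.pow_le_pow_right (by have := hp.two_le; omega) hm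
  have hq3 : 3 ≤ q := by
    have := Nat.odd_iff.mp hodd
    omega
  haveI : NeZero q := ⟨by omega⟩
  have hM1 : 1 ≤ n - 1 := by omega
  -- minimum distance of C is at least 4
  have mind4 : ∀ c ∈ C, ∀ c' ∈ C, c ≠ c' → 4 ≤ hammingDist c c' := by
    intro c hc c' hc' hne
    have hmem : (hammingGraph n q).dist c c' ∈
        {d : ℕ | ∃ x ∈ C, ∃ y ∈ C, x ≠ y ∧ (hammingGraph n q).dist x y = d} :=
      ⟨c, hc, c', hc', hne, rfl⟩
    have hle := Nat.sInf_le hmem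
    rw [codeDist] at hd4
    rw [hd4] at hle
    exact le_trans hle (hg_dist_le_hd c c')
  -- perfectness of the projection in Hamming distance terms
  have H1 : ∀ y : Fin (n-1) → ZMod q, ∃! p', p' ∈ hammingProj i C ∧ hammingDist y p' ≤ 1 := by
    intro y
    obtain ⟨c, ⟨hcP, hcd⟩, huniq⟩ := hperf y
    refine ⟨c, ⟨hcP, hg_dist_le_one_iff.mp hcd⟩, ?_⟩
    rintro y' ⟨h1, h2⟩
    exact huniq y' ⟨h1, hg_dist_le_one_iff.mpr h2⟩
  -- injectivity of projection on the code
  have hproj_inj : ∀ c ∈ C, ∀ c' ∈ C, deleteCoord i c = deleteCoord i c' → c = c' := by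
    intro c hc c' hc' h
    by_contra hne
    have h4 := mind4 c hc c' hc' hne
    have hsplit := hd_split i c c'
    rw [h, hammingDist_self] at hsplit
    split_ifs at hsplit <;> omega
  -- the last-coordinate function
  set f : (Fin (n-1) → ZMod q) → ZMod q := fun y =>
    if h : ∃ c, c ∈ C ∧ deleteCoord i c = y then (Classical.choose h) i else 0 with hf
  have hfC : ∀ c ∈ C, f (deleteCoord i c) = c i := by
    intro c hc
    have hex : ∃ c', c' ∈ C ∧ deleteCoord i c' = deleteCoord i c := ⟨c, hc, rfl⟩
    rw [hf]
    simp only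
    rw [dif_pos hex]
    have hspec := Classical.choose_spec hex
    rw [hproj_inj _ hspec.1 c hc hspec.2]
  have H2 : ∀ p' ∈ hammingProj i C, ∀ p'' ∈ hammingProj i C, p' ≠ p'' →
      3 ≤ hammingDist p' p'' := by
    rintro p' ⟨c, hc, rfl⟩ p'' ⟨c', hc', rfl⟩ hne
    have hcne : c ≠ c' := fun h => hne (by rw [h])
    have h4 := mind4 c hc c' hc' hcne
    have hsplit := hd_split i c c'
    split_ifs at hsplit <;> omega
  have H3 : ∀ p' ∈ hammingProj i C, ∀ p'' ∈ hammingProj i C,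
      hammingDist p' p'' = 3 → f p' ≠ f p'' := by
    rintro p' ⟨c, hc, rfl⟩ p'' ⟨c', hc', rfl⟩ h3 hfeq
    rw [hfC c hc, hfC c' hc'] at hfeq
    have hcne : c ≠ c' := by
      intro h
      rw [h, hammingDist_self] at h3
      omega
    have h4 := mind4 c hc c' hc' hcne
    have hsplit := hd_split i c c'
    rw [h3, if_pos hfeq] at hsplit
    omega
  have hModd : Odd (n - 1) := core_parity hq3 hM1 (hammingProj i C) f H1 H2 H3
  have hdvd := perfect_count H1
  obtain ⟨k, hk1, hkD⟩ := pow_structure hp hm hq hM1 hdvd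
  have hkodd := geom_parity hq2 hodd hkD hModd
  refine ⟨k, hkodd, by omega, ?_⟩
  have hqk : q ≤ q ^ k := Nat.le_self_pow (by omega) q
  have hnm : n * (q - 1) = (n - 1) * (q - 1) + (q - 1) := by
    obtain ⟨N, rfl⟩ : ∃ N, n = N + 1 := ⟨n - 1, by omega⟩
    simp [Nat.add_mul]
  omega
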